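/- Let G be a group of order 2 acting on the multiplicative group ℂˣ of nonzero complex numbers by letting the nontrivial element act by z ↦ (z̄)⁻¹, the inverse of the complex conjugate. Then the first group cohomology H¹(G, ℂˣ) is isomorphic to ℤ/2ℤ. -/

import Mathlib

open groupCohomology

/-- The "sign" of a complex unit: `0` if the real part is positive, `1` otherwise. -/
noncomputable def csgn (z : ℂˣ) : ZMod 2 := if 0 < (z : ℂ).re then 0 else 1

lemma csgn_one : csgn 1 = 0 := by simp [csgn]

lemma re_ne_zero_of_im_eq_zero (z : ℂˣ) (h : (z : ℂ).im = 0) : (z : ℂ).re ≠ 0 := by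
  intro h0
  exact z.ne_zero (Complex.ext h0 h)

lemma csgn_mul (z w : ℂˣ) (hz : (z : ℂ).im = 0) (hw : (w : ℂ).im = 0) :
    csgn (z * w) = csgn z + csgn w := by
  have hre : ((z * w : ℂˣ) : ℂ).re = (z : ℂ).re * (w : ℂ).re := by
    simp [Complex.mul_re, hz, hw]
  have hz' := (re_ne_zero_of_im_eq_zero z hz).lt_or_gt
  have hw' := (re_ne_zero_of_im_eq_zero w hw).lt_or_gt
  unfold csgn
  rcases hz' with h1 | h1 <;> rcases hw' with h2 | h2
  · rw [if_pos (by rw [hre]; exact mul_pos_of_neg_of_neg h1 h2),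
      if_neg (asymm h1), if_neg (asymm h2)]; decide
  · rw [if_neg (by rw [hre]; exact not_lt.2 (mul_nonpos_of_nonpos_of_nonneg h1.le h2.le)),
      if_neg (asymm h1), if_pos h2]; decide
  · rw [if_neg (by rw [hre]; exact not_lt.2 (mul_nonpos_of_nonneg_of_nonpos h1.le h2.le)),
      if_pos h1, if_neg (asymm h2)]; decide
  · rw [if_pos (by rw [hre]; exact mul_pos h1 h2), if_pos h1, if_pos h2]; decide

/-- Let `G` be a group of order `2` acting on the multiplicative group `ℂˣ` so that the
nontrivial element acts by `z ↦ (conj z)⁻¹` (written additively via `Additive ℂˣ`, so that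
the action is a representation of `G` on the `ℤ`-module `Additive ℂˣ`).  Then the first
group cohomology `H¹(G, ℂˣ)` (inhomogeneous 1-cocycles modulo 1-coboundaries) is
isomorphic to `ℤ/2ℤ`. -/
theorem statement10 {G : Type} [Group G] [Fintype G] (hG : Fintype.card G = 2)
    (ρ : Representation ℤ G (Additive ℂˣ))
    (hρ : ∀ g : G, g ≠ 1 → ∀ z : ℂˣ,
      ρ g (Additive.ofMul z) =
        Additive.ofMul ((Units.map (starRingEnd ℂ).toMonoidHom z)⁻¹)) :
    Nonempty (groupCohomology.H1 (Rep.of ρ) ≃+ ZMod 2) := by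
  classical
  obtain ⟨g, hg⟩ := Fintype.exists_ne_of_one_lt_card (by omega) (1 : G)
  have hmem : ∀ x : G, x = 1 ∨ x = g := by
    have h2 : ({1, g} : Finset G).card = 2 := Finset.card_pair (Ne.symm hg)
    have huniv : (Finset.univ : Finset G) = {1, g} :=
      (Finset.eq_of_subset_of_card_le (Finset.subset_univ _)
        (by rw [Finset.card_univ, hG, h2])).symm
    intro x
    have hx := Finset.mem_univ x
    rw [huniv] at hx
    simpa using hx
  have hgg : g * g = 1 := by
    rcases hmem (g * g) with h | h
    · exact h
    · exact absurd (mul_right_cancel (h.trans (one_mul g).symm)) hg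
  set A := Rep.of ρ with hA
  -- every 1-cocycle takes a real value at `g`
  have hreal : ∀ f : cocycles₁ A, ((Additive.toMul (α := ℂˣ) (f g) : ℂˣ) : ℂ).im = 0 := by
    intro f
    have h1 := (mem_cocycles₁_iff (A := A) f).1 f.2 g g
    rw [hgg, cocycles₁_map_one] at h1
    have h2 : A.ρ g (f g) = - f g := eq_neg_of_add_eq_zero_left h1.symm
    have h3 : A.ρ g (f g) = Additive.ofMul ((Units.map (starRingEnd ℂ).toMonoidHom
        (Additive.toMul (α := ℂˣ) (f g)))⁻¹) := hρ g hg _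
    have e1 : Additive.ofMul ((Units.map (starRingEnd ℂ).toMonoidHom
        (Additive.toMul (α := ℂˣ) (f g)))⁻¹) =
        Additive.ofMul ((Additive.toMul (α := ℂˣ) (f g))⁻¹) :=
      h3.symm.trans (h2.trans (ofMul_inv (Additive.toMul (α := ℂˣ) (f g))).symm)
    have h5 := inv_injective (Additive.ofMul.injective e1)
    have h6 := congrArg (Units.val) h5
    rw [Units.coe_map] at h6
    exact Complex.conj_eq_iff_im.1 h6
  -- the sign homomorphism on cocycles
  let B : Submodule ℤ (cocycles₁ A) := LinearMap.range (shortComplexH1 A).moduleCatToCycles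
  have mem_oneCoboundaries_iff : ∀ f : cocycles₁ A, f ∈ B ↔ ∃ x : A, ∀ h : G, A.ρ h x - x = f h := by
    intro f
    constructor
    · rintro ⟨x, rfl⟩
      exact ⟨x, fun h => rfl⟩
    · rintro ⟨x, hx⟩
      exact ⟨x, Subtype.ext (funext hx)⟩
  let φ : cocycles₁ A →+ ZMod 2 :=
    { toFun := fun f => csgn (Additive.toMul (f g))
      map_zero' := by
        show csgn (Additive.toMul ((0 : G → Additive ℂˣ) g)) = 0
        simp [csgn_one]
      map_add' := fun f f' => by
        show csgn (Additive.toMul (α := ℂˣ) (f g + f' g)) = _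
        rw [toMul_add, csgn_mul _ _ (hreal f) (hreal f')] }
  have hle : B ≤ LinearMap.ker φ.toIntLinearMap := by
    intro f hf
    rw [LinearMap.mem_ker]
    obtain ⟨x, hx⟩ := (mem_oneCoboundaries_iff f).1 hf
    have hgx := hx g
    have h3 : A.ρ g x = Additive.ofMul ((Units.map (starRingEnd ℂ).toMonoidHom
        (Additive.toMul (α := ℂˣ) x))⁻¹) := hρ g hg _
    rw [h3] at hgx
    show csgn (Additive.toMul (α := ℂˣ) (f g)) = 0
    have hfg : Additive.toMul (α := ℂˣ) (f g) =
        (Units.map (starRingEnd ℂ).toMonoidHom (Additive.toMul (α := ℂˣ) x))⁻¹ *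
          (Additive.toMul (α := ℂˣ) x)⁻¹ := by
      rw [← hgx]
      rfl
    have hval : ((Additive.toMul (α := ℂˣ) (f g) : ℂˣ) : ℂ) =
        ((Complex.normSq ((Additive.toMul (α := ℂˣ) x : ℂˣ) : ℂ) : ℂ))⁻¹ := by
      rw [hfg]
      push_cast [Units.coe_map]
      simp only [RingHom.toMonoidHom_eq_coe, MonoidHom.coe_coe]
      rw [← mul_inv, mul_comm, Complex.mul_conj]
    have hpos : 0 < ((Additive.toMul (α := ℂˣ) (f g) : ℂˣ) : ℂ).re := by
      rw [hval, ← Complex.ofReal_inv, Complex.ofReal_re]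
      exact inv_pos.2 (Complex.normSq_pos.2 (Units.ne_zero _))
    unfold csgn
    exact if_pos hpos
  let ψ :=
    Submodule.liftQ B φ.toIntLinearMap hle
  have hmkψ : ∀ f : cocycles₁ A, ψ (Submodule.Quotient.mk f) =
      csgn (Additive.toMul (f g)) := fun f => rfl
  have hinj : Function.Injective ψ := by
    rw [injective_iff_map_eq_zero]
    intro q hq
    obtain ⟨f, rfl⟩ := Submodule.Quotient.mk_surjective _ q
    rw [hmkψ] at hq
    rw [Submodule.Quotient.mk_eq_zero]
    have hpos : 0 < ((Additive.toMul (α := ℂˣ) (f g) : ℂˣ) : ℂ).re := by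
      by_contra h
      unfold csgn at hq
      rw [if_neg h] at hq
      exact one_ne_zero hq
    set r : ℝ := ((Additive.toMul (α := ℂˣ) (f g) : ℂˣ) : ℂ).re with hr
    have hune : (((Real.sqrt r)⁻¹ : ℝ) : ℂ) ≠ 0 := by
      rw [Complex.ofReal_ne_zero]
      exact inv_ne_zero (ne_of_gt (Real.sqrt_pos.2 hpos))
    set u : ℂˣ := Units.mk0 _ hune with hu
    refine (mem_oneCoboundaries_iff f).2 ⟨Additive.ofMul u, fun h => ?_⟩
    rcases hmem h with rfl | hh
    · rw [map_one]
      exact (sub_self _).trans (cocycles₁_map_one f).symm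
    · rw [hh]
      have h3 : A.ρ g (Additive.ofMul u) = Additive.ofMul
          ((Units.map (starRingEnd ℂ).toMonoidHom u)⁻¹) := hρ g hg _
      rw [h3]
      have hval : (Units.map (starRingEnd ℂ).toMonoidHom u)⁻¹ * u⁻¹ =
          Additive.toMul (α := ℂˣ) (f g) := by
        rw [Units.ext_iff]
        push_cast [Units.coe_map, hu, Units.val_mk0]
        simp only [RingHom.toMonoidHom_eq_coe, MonoidHom.coe_coe]
        rw [map_inv₀, Complex.conj_ofReal, inv_inv, ← Complex.ofReal_mul,
          Real.mul_self_sqrt hpos.le]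
        exact (Complex.ext (by simp [hr]) (by simpa using hreal f)).symm
      calc Additive.ofMul ((Units.map (starRingEnd ℂ).toMonoidHom u)⁻¹) - Additive.ofMul u
          = Additive.ofMul ((Units.map (starRingEnd ℂ).toMonoidHom u)⁻¹ * u⁻¹) := by
            rw [ofMul_mul, ofMul_inv]; rfl
        _ = f g := by rw [hval]; rfl
  -- the nontrivial cocycle
  let f₀ : G → Additive ℂˣ := fun x => if x = 1 then 0 else Additive.ofMul (-1 : ℂˣ)
  have hneg : (Units.map (starRingEnd ℂ).toMonoidHom (-1 : ℂˣ))⁻¹ = -1 := by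
    rw [Units.ext_iff]
    push_cast [Units.coe_map]
    simp only [RingHom.toMonoidHom_eq_coe, MonoidHom.coe_coe]
    norm_num
  have hf₀ : f₀ ∈ cocycles₁ A := by
    refine (mem_cocycles₁_iff (A := A) f₀).2 fun a b => ?_
    rcases hmem a with rfl | ha
    · rw [one_mul, map_one]
      simp [f₀]
    · rcases hmem b with rfl | hb
      · rw [mul_one]
        simp [f₀]
      · rw [ha, hb, hgg]
        simp only [f₀, if_pos rfl, if_neg hg]
        have key : ρ g (Additive.ofMul (-1 : ℂˣ)) + Additive.ofMul (-1 : ℂˣ) = 0 := by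
          rw [hρ g hg (-1 : ℂˣ), hneg, ← ofMul_mul]
          have h4 : (-1 : ℂˣ) * (-1) = 1 := by simp
          rw [h4]
          rfl
        exact key.symm
  have hsurj : Function.Surjective ψ := by
    intro c
    have hc : c = 0 ∨ c = 1 := by revert c; decide
    rcases hc with rfl | rfl
    · exact ⟨0, map_zero ψ⟩
    · refine ⟨Submodule.Quotient.mk ⟨f₀, hf₀⟩, ?_⟩
      rw [hmkψ]
      show csgn (Additive.toMul (α := ℂˣ) (f₀ g)) = 1
      have h1 : f₀ g = Additive.ofMul (-1 : ℂˣ) := if_neg hg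
      rw [h1]
      show csgn (-1 : ℂˣ) = 1
      have h2 : ((-1 : ℂˣ) : ℂ).re = -1 := by simp
      unfold csgn
      rw [h2, if_neg (by norm_num)]
  exact ⟨((H1Iso A).toLinearEquiv.toAddEquiv).trans (AddEquiv.ofBijective ψ ⟨hinj, hsurj⟩)⟩
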